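/- Taylor remainder formula for the discrete average operator: if f : ℝ → ℝ is twice continuously differentiable, then A_h^n f = f + R_{A_h^n}(f), where R_{A_h^n}(f)(x) = (h²/2^{n+2}) Σ_{k=0}^{n} C(n,k)(n-2k)² ∫_0^1 (1-σ) f''(x + ((n-2k)h/2)σ) dσ. In particular, |A_h^n f(x) - f(x)| ≤ C h² sup|f''| with C depending only on n. -/

import Mathlib

open Finset intervalIntegral

/-- Iterated average `A_h^n f (x) = 2^{-n} Σ_{k=0}^n C(n,k) f(x + (n-2k)h/2)`. -/
noncomputable def AhIter (h : ℝ) (n : ℕ) (f : ℝ → ℝ) : ℝ → ℝ := fun x =>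
  (1 / 2 ^ n) * ∑ k ∈ Finset.range (n + 1),
    (n.choose k : ℝ) * f (x + ((n : ℝ) - 2 * k) * h / 2)

lemma taylor_aux (f : ℝ → ℝ) (hf : ContDiff ℝ 2 f) (x a : ℝ) :
    f (x + a) = f x + a * deriv f x
      + a ^ 2 * ∫ σ in (0:ℝ)..1, (1 - σ) * iteratedDeriv 2 f (x + a * σ) := by
  have hf1 : ContDiff ℝ 1 (deriv f) := by
    have := ContDiff.iterate_deriv' 1 1 (f := f) (by exact_mod_cast hf)
    simpa using this
  have hdf : Differentiable ℝ f := hf.differentiable (by norm_num)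
  have hddf : Differentiable ℝ (deriv f) := hf1.differentiable (by norm_num)
  have hcont2 : Continuous (deriv (deriv f)) := hf1.continuous_deriv le_rfl
  have hit2 : iteratedDeriv 2 f = deriv (deriv f) := by
    rw [iteratedDeriv_succ, iteratedDeriv_one]
  have haff : ∀ σ : ℝ, HasDerivAt (fun σ : ℝ => x + a * σ) a σ := by
    intro σ
    simpa using ((hasDerivAt_id σ).const_mul a).const_add x
  have hg : ∀ σ : ℝ, HasDerivAt (fun σ : ℝ => f (x + a * σ)) (a * deriv f (x + a * σ)) σ := by
    intro σ
    have := ((hdf (x + a * σ)).hasDerivAt).comp σ (haff σ)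
    rw [mul_comm]; exact this
  have hg' : ∀ σ : ℝ, HasDerivAt (fun σ : ℝ => a * deriv f (x + a * σ))
      (a ^ 2 * deriv (deriv f) (x + a * σ)) σ := by
    intro σ
    have := (((hddf (x + a * σ)).hasDerivAt).comp σ (haff σ)).const_mul a
    rw [show a ^ 2 * deriv (deriv f) (x + a * σ) = a * (deriv (deriv f) (x + a * σ) * a) by ring]; exact this
  have hcg' : Continuous (fun σ : ℝ => a * deriv f (x + a * σ)) :=
    (continuous_const.mul (hddf.continuous.comp (by continuity)))
  have hcg'' : Continuous (fun σ : ℝ => a ^ 2 * deriv (deriv f) (x + a * σ)) :=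
    (continuous_const.mul (hcont2.comp (by continuity)))
  have hparts : ∫ σ in (0:ℝ)..1, (1 - σ) * (a ^ 2 * deriv (deriv f) (x + a * σ))
      = (1 - 1) * (a * deriv f (x + a * 1)) - (1 - 0) * (a * deriv f (x + a * 0))
        - ∫ σ in (0:ℝ)..1, (-1) * (a * deriv f (x + a * σ)) := by
    have := intervalIntegral.integral_mul_deriv_eq_deriv_mul (a := (0:ℝ)) (b := 1)
      (u := fun σ => 1 - σ) (v := fun σ => a * deriv f (x + a * σ))
      (u' := fun _ => -1) (v' := fun σ => a ^ 2 * deriv (deriv f) (x + a * σ))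
      (fun σ _ => by simpa using ((hasDerivAt_id σ).const_sub 1))
      (fun σ _ => hg' σ)
      ((continuous_const (y := (-1:ℝ))).intervalIntegrable _ _)
      (hcg''.intervalIntegrable _ _)
    simpa using this
  have hftc : ∫ σ in (0:ℝ)..1, a * deriv f (x + a * σ) = f (x + a * 1) - f (x + a * 0) :=
    intervalIntegral.integral_eq_sub_of_hasDerivAt (fun σ _ => hg σ)
      (hcg'.intervalIntegrable _ _)
  have hneg : ∫ σ in (0:ℝ)..1, (-1) * (a * deriv f (x + a * σ))
      = -(f (x + a * 1) - f (x + a * 0)) := by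
    rw [← hftc, ← intervalIntegral.integral_neg]
    congr 1; funext σ; ring
  have hpull : ∫ σ in (0:ℝ)..1, (1 - σ) * iteratedDeriv 2 f (x + a * σ)
      = (∫ σ in (0:ℝ)..1, (1 - σ) * (deriv (deriv f) (x + a * σ))) := by
    rw [hit2]
  have key : a ^ 2 * ∫ σ in (0:ℝ)..1, (1 - σ) * (deriv (deriv f) (x + a * σ))
      = f (x + a) - f x - a * deriv f x := by
    rw [← intervalIntegral.integral_const_mul]
    have : ∫ σ in (0:ℝ)..1, a ^ 2 * ((1 - σ) * deriv (deriv f) (x + a * σ))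
        = ∫ σ in (0:ℝ)..1, (1 - σ) * (a ^ 2 * deriv (deriv f) (x + a * σ)) := by
      congr 1; funext σ; ring
    rw [this, hparts, hneg]
    simp only [mul_one, mul_zero, add_zero]
    ring
  rw [hpull]
  rw [key]; ring

lemma sum_choose_center (n : ℕ) :
    ∑ k ∈ Finset.range (n + 1), (n.choose k : ℝ) * ((n : ℝ) - 2 * k) = 0 := by
  have hrefl := Finset.sum_range_reflect
    (fun k => (n.choose k : ℝ) * ((n : ℝ) - 2 * k)) (n + 1)
  have heq : ∀ j ∈ Finset.range (n + 1),
      (n.choose (n + 1 - 1 - j) : ℝ) * ((n : ℝ) - 2 * (n + 1 - 1 - j : ℕ))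
        = -((n.choose j : ℝ) * ((n : ℝ) - 2 * j)) := by
    intro j hj
    have hjn : j ≤ n := Nat.lt_succ_iff.mp (Finset.mem_range.mp hj)
    have h1 : n + 1 - 1 - j = n - j := by omega
    rw [h1, Nat.choose_symm hjn, Nat.cast_sub hjn]
    ring
  rw [Finset.sum_congr rfl heq, Finset.sum_neg_distrib] at hrefl
  linarith

lemma sum_choose_sq_nonneg (n : ℕ) :
    0 ≤ ∑ k ∈ Finset.range (n + 1), (n.choose k : ℝ) * ((n : ℝ) - 2 * k) ^ 2 := by
  apply Finset.sum_nonneg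
  intro k _
  positivity

/-- Taylor remainder formula for the iterated average: if `f` is `C²` then
`A_h^n f = f + R_{A_h^n}(f)` with the explicit integral remainder, and in particular
`|A_h^n f(x) - f(x)| ≤ C h² sup |f''|` with `C` depending only on `n`. -/
theorem AhIter_taylor (n : ℕ) :
    ∃ C > 0, ∀ (h : ℝ), 0 < h → ∀ (f : ℝ → ℝ), ContDiff ℝ 2 f → ∀ x : ℝ,
      (AhIter h n f x
          = f x
            + h ^ 2 / 2 ^ (n + 2) * ∑ k ∈ Finset.range (n + 1),
                (n.choose k : ℝ) * ((n : ℝ) - 2 * k) ^ 2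
                  * ∫ σ in (0:ℝ)..1,
                      (1 - σ) * iteratedDeriv 2 f (x + ((n : ℝ) - 2 * k) * h / 2 * σ)) ∧
        ∀ M : ℝ, (∀ y : ℝ, |iteratedDeriv 2 f y| ≤ M) →
          |AhIter h n f x - f x| ≤ C * h ^ 2 * M := by
  set B := ∑ k ∈ Finset.range (n + 1), (n.choose k : ℝ) * ((n : ℝ) - 2 * k) ^ 2 with hB
  have hBnn : 0 ≤ B := sum_choose_sq_nonneg n
  refine ⟨B / 2 ^ (n + 2) + 1, by positivity, ?_⟩
  intro h hh f hf x
  set I : ℕ → ℝ := fun k =>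
    ∫ σ in (0:ℝ)..1, (1 - σ) * iteratedDeriv 2 f (x + ((n : ℝ) - 2 * k) * h / 2 * σ) with hI
  have hS1 : (∑ k ∈ Finset.range (n + 1), (n.choose k : ℝ)) = 2 ^ n := by
    exact_mod_cast Nat.sum_range_choose n
  have heq : AhIter h n f x
      = f x + h ^ 2 / 2 ^ (n + 2) * ∑ k ∈ Finset.range (n + 1),
          (n.choose k : ℝ) * ((n : ℝ) - 2 * k) ^ 2 * I k := by
    have hexp : ∀ k ∈ Finset.range (n + 1),
        (n.choose k : ℝ) * f (x + ((n : ℝ) - 2 * k) * h / 2)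
          = f x * (n.choose k : ℝ)
            + (deriv f x * (h / 2)) * ((n.choose k : ℝ) * ((n : ℝ) - 2 * k))
            + (h ^ 2 / 4) * ((n.choose k : ℝ) * ((n : ℝ) - 2 * k) ^ 2 * I k) := by
      intro k _
      rw [taylor_aux f hf x (((n : ℝ) - 2 * k) * h / 2)]
      simp only [hI]
      ring
    rw [AhIter, Finset.sum_congr rfl hexp]
    rw [Finset.sum_add_distrib, Finset.sum_add_distrib, ← Finset.mul_sum, ← Finset.mul_sum,
      ← Finset.mul_sum, hS1, sum_choose_center n]
    have h2n : (2:ℝ) ^ n ≠ 0 := by positivity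
    field_simp
    ring
  refine ⟨heq, ?_⟩
  intro M hM
  have hM0 : 0 ≤ M := le_trans (abs_nonneg _) (hM 0)
  have hIk : ∀ k, |I k| ≤ M := by
    intro k
    have := intervalIntegral.norm_integral_le_of_norm_le_const (a := (0:ℝ)) (b := 1) (C := M)
      (f := fun σ => (1 - σ) * iteratedDeriv 2 f (x + ((n : ℝ) - 2 * k) * h / 2 * σ)) ?_
    · simpa using this
    · intro σ hσ
      rw [Set.uIoc_of_le (by norm_num : (0:ℝ) ≤ 1)] at hσ
      have h1 : |1 - σ| ≤ 1 := by
        rw [abs_le]; constructor <;> [linarith [hσ.2]; linarith [hσ.1.le]]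
      calc ‖(1 - σ) * iteratedDeriv 2 f (x + ((n : ℝ) - 2 * k) * h / 2 * σ)‖
          = |1 - σ| * |iteratedDeriv 2 f (x + ((n : ℝ) - 2 * k) * h / 2 * σ)| := abs_mul _ _
        _ ≤ 1 * M := by
            exact mul_le_mul h1 (hM _) (abs_nonneg _) zero_le_one
        _ = M := one_mul M
  have hT : |∑ k ∈ Finset.range (n + 1), (n.choose k : ℝ) * ((n : ℝ) - 2 * k) ^ 2 * I k|
      ≤ B * M := by
    calc |∑ k ∈ Finset.range (n + 1), (n.choose k : ℝ) * ((n : ℝ) - 2 * k) ^ 2 * I k|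
        ≤ ∑ k ∈ Finset.range (n + 1), |(n.choose k : ℝ) * ((n : ℝ) - 2 * k) ^ 2 * I k| :=
          Finset.abs_sum_le_sum_abs _ _
      _ ≤ ∑ k ∈ Finset.range (n + 1), (n.choose k : ℝ) * ((n : ℝ) - 2 * k) ^ 2 * M := by
          apply Finset.sum_le_sum
          intro k _
          rw [abs_mul, abs_of_nonneg (by positivity : (0:ℝ) ≤ (n.choose k : ℝ) * ((n : ℝ) - 2 * k) ^ 2)]
          exact mul_le_mul_of_nonneg_left (hIk k) (by positivity)
      _ = B * M := by rw [hB, ← Finset.sum_mul]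
  rw [heq]
  have habs : |f x + h ^ 2 / 2 ^ (n + 2) * ∑ k ∈ Finset.range (n + 1),
      (n.choose k : ℝ) * ((n : ℝ) - 2 * k) ^ 2 * I k - f x|
      = h ^ 2 / 2 ^ (n + 2)
        * |∑ k ∈ Finset.range (n + 1), (n.choose k : ℝ) * ((n : ℝ) - 2 * k) ^ 2 * I k| := by
    rw [add_sub_cancel_left, abs_mul, abs_of_nonneg (by positivity : (0:ℝ) ≤ h ^ 2 / 2 ^ (n + 2))]
  rw [habs]
  have h2p : (0:ℝ) < 2 ^ (n + 2) := by positivity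
  calc h ^ 2 / 2 ^ (n + 2) * |∑ k ∈ Finset.range (n + 1),
        (n.choose k : ℝ) * ((n : ℝ) - 2 * k) ^ 2 * I k|
      ≤ h ^ 2 / 2 ^ (n + 2) * (B * M) :=
        mul_le_mul_of_nonneg_left hT (by positivity)
    _ ≤ (B / 2 ^ (n + 2) + 1) * h ^ 2 * M := by
        have key : h ^ 2 / 2 ^ (n + 2) * (B * M) = B / 2 ^ (n + 2) * h ^ 2 * M := by ring
        rw [key, add_mul, add_mul, one_mul]
        nlinarith [mul_nonneg (sq_nonneg h) hM0]
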